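/- Let α, β be 2-dimensional linear subspaces of Minkowski ℝ⁴ with η(u, v) = 0 for all u ∈ α, v ∈ β. If neither α nor β contains a timelike vector, then each of α and β contains a nonzero null vector, and these null directions are collinear with each other. -/

import Mathlib

/-- The Minkowski bilinear form on ℝ⁴. -/
def minkowski (a b : Fin 4 → ℝ) : ℝ :=
  -(a 0 * b 0) + a 1 * b 1 + a 2 * b 2 + a 3 * b 3


set_option maxHeartbeats 2000000

namespace Stmt9Aux

lemma mink_symm (a b : Fin 4 → ℝ) : minkowski a b = minkowski b a := by
  simp [minkowski]; ring

/-- `x ↦ minkowski x w` as a linear map. -/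
def minkL (w : Fin 4 → ℝ) : (Fin 4 → ℝ) →ₗ[ℝ] ℝ where
  toFun x := minkowski x w
  map_add' x y := by simp [minkowski]; ring
  map_smul' s x := by simp [minkowski]; ring

lemma minkL_apply (w x : Fin 4 → ℝ) : minkL w x = minkowski x w := rfl

lemma mink_smul_add (s r : ℝ) (a c w : Fin 4 → ℝ) :
    minkowski (s • a + r • c) w = s * minkowski a w + r * minkowski c w := by
  simp [minkowski]; ring

lemma mink_smul_add_right (s r : ℝ) (a c w : Fin 4 → ℝ) :
    minkowski w (s • a + r • c) = s * minkowski w a + r * minkowski w c := by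
  simp [minkowski]; ring

lemma mink_sub_sub (x : Fin 4 → ℝ) (s r : ℝ) (a c w : Fin 4 → ℝ) :
    minkowski (x - s • a - r • c) w
      = minkowski x w - s * minkowski a w - r * minkowski c w := by
  simp [minkowski]; ring

lemma mink_sub_sub_right (x : Fin 4 → ℝ) (s r : ℝ) (a c w : Fin 4 → ℝ) :
    minkowski w (x - s • a - r • c)
      = minkowski w x - s * minkowski w a - r * minkowski w c := by
  simp [minkowski]; ring

/-- Two nonzero orthogonal null vectors are collinear. -/
lemma null_collinear (u v : Fin 4 → ℝ) (hu : u ≠ 0) (hv : v ≠ 0)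
    (huu : minkowski u u = 0) (hvv : minkowski v v = 0)
    (huv : minkowski u v = 0) : ∃ l : ℝ, v = l • u := by
  simp only [minkowski] at huu hvv huv
  have hu0 : u 0 ≠ 0 := by
    intro h0
    apply hu
    have hsum : u 1 * u 1 + u 2 * u 2 + u 3 * u 3 = 0 := by
      linear_combination huu + u 0 * h0
    have n1 := mul_self_nonneg (u 1)
    have n2 := mul_self_nonneg (u 2)
    have n3 := mul_self_nonneg (u 3)
    have e1 : u 1 = 0 := mul_self_eq_zero.mp (by linarith)
    have e2 : u 2 = 0 := mul_self_eq_zero.mp (by linarith)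
    have e3 : u 3 = 0 := mul_self_eq_zero.mp (by linarith)
    funext i
    fin_cases i <;> simp only [Pi.zero_apply] <;> [exact h0; exact e1; exact e2; exact e3]
  have key : (u 0 * v 1 - v 0 * u 1) ^ 2 + (u 0 * v 2 - v 0 * u 2) ^ 2
      + (u 0 * v 3 - v 0 * u 3) ^ 2 = 0 := by
    linear_combination (v 0 * v 0) * huu + (u 0 * u 0) * hvv - 2 * (u 0 * v 0) * huv
  have n1 := sq_nonneg (u 0 * v 1 - v 0 * u 1)
  have n2 := sq_nonneg (u 0 * v 2 - v 0 * u 2)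
  have n3 := sq_nonneg (u 0 * v 3 - v 0 * u 3)
  have h1 : u 0 * v 1 - v 0 * u 1 = 0 := by
    have : (u 0 * v 1 - v 0 * u 1) ^ 2 = 0 := by linarith
    exact pow_eq_zero_iff (by norm_num) |>.mp this
  have h2 : u 0 * v 2 - v 0 * u 2 = 0 := by
    have : (u 0 * v 2 - v 0 * u 2) ^ 2 = 0 := by linarith
    exact pow_eq_zero_iff (by norm_num) |>.mp this
  have h3 : u 0 * v 3 - v 0 * u 3 = 0 := by
    have : (u 0 * v 3 - v 0 * u 3) ^ 2 = 0 := by linarith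
    exact pow_eq_zero_iff (by norm_num) |>.mp this
  refine ⟨v 0 / u 0, ?_⟩
  have e0 : v 0 = v 0 / u 0 * u 0 := by field_simp
  have e1 : v 1 = v 0 / u 0 * u 1 := by field_simp; linear_combination h1
  have e2 : v 2 = v 0 / u 0 * u 2 := by field_simp; linear_combination h2
  have e3 : v 3 = v 0 / u 0 * u 3 := by field_simp; linear_combination h3
  funext i
  fin_cases i <;> simp only [Pi.smul_apply, smul_eq_mul] <;>
    [exact e0; exact e1; exact e2; exact e3]

/-- Key lemma: if α is positive definite, β ⊥ α, both 2-dim'l, then β has a timelike vector: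
contradiction. -/
lemma exists_null (α β : Submodule ℝ (Fin 4 → ℝ))
    (hα2 : Module.finrank ℝ α = 2)
    (hβ2 : Module.finrank ℝ β = 2)
    (horth : ∀ u ∈ α, ∀ v ∈ β, minkowski u v = 0)
    (hβnt : ∀ v ∈ β, ¬ minkowski v v < 0)
    (hpos : ∀ u ∈ α, u ≠ 0 → 0 < minkowski u u) : False := by
  classical
  -- choose a basis of α
  let bas := Module.finBasisOfFinrankEq ℝ α hα2
  set a : Fin 4 → ℝ := ↑(bas 0) with ha
  set c : Fin 4 → ℝ := ↑(bas 1) with hc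
  have haα : a ∈ α := (bas 0).2
  have hcα : c ∈ α := (bas 1).2
  -- linear independence of a, c in the ambient space
  have hindep : ∀ s r : ℝ, s • a + r • c = 0 → s = 0 ∧ r = 0 := by
    intro s r hsr
    have h0 : s • bas 0 + r • bas 1 = (0 : α) := by
      apply Subtype.ext
      push_cast
      exact hsr
    have := Fintype.linearIndependent_iff.mp bas.linearIndependent (fun i => ![s, r] i)
    have hsum : ∑ i, ![s, r] i • bas i = 0 := by
      rw [Fin.sum_univ_two]; simpa using h0
    exact ⟨this hsum 0, this hsum 1⟩
  set A : ℝ := minkowski a a with hA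
  set B : ℝ := minkowski c c with hB
  set C : ℝ := minkowski a c with hC
  have hane : a ≠ 0 := by
    intro h
    have := hindep 1 0 (by simp [h])
    simp at this
  have hApos : 0 < A := hpos a haα hane
  -- positivity of the Gram determinant
  have hQ : ∀ s r : ℝ, minkowski (s • a + r • c) (s • a + r • c)
      = s * s * A + 2 * (s * r) * C + r * r * B := by
    intro s r
    rw [mink_smul_add, mink_smul_add_right, mink_smul_add_right]
    rw [hA, hB, hC, mink_symm c a]
    ring
  have hD : 0 < A * B - C * C := by
    have hw : C • a + (-A) • c ≠ 0 := by
      intro h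
      rcases hindep _ _ h with ⟨h1, h2⟩
      linarith
    have hwα : C • a + (-A) • c ∈ α := α.add_mem (α.smul_mem _ haα) (α.smul_mem _ hcα)
    have := hpos _ hwα hw
    rw [hQ] at this
    nlinarith
  -- the kernel of the evaluation map at a, c
  set L : (Fin 4 → ℝ) →ₗ[ℝ] ℝ × ℝ := (minkL a).prod (minkL c) with hL
  have hLapply : ∀ x, L x = (minkowski x a, minkowski x c) := fun x => rfl
  -- L is surjective
  have hsurj : Function.Surjective L := by
    intro ⟨p, q⟩
    refine ⟨((p * B - q * C) / (A * B - C * C)) • a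
      + ((q * A - p * C) / (A * B - C * C)) • c, ?_⟩
    rw [hLapply, mink_smul_add, mink_smul_add]
    rw [show minkowski c a = C from mink_symm c a ▸ rfl]
    rw [← hA, ← hB, ← hC]
    have hD' : A * B - C * C ≠ 0 := ne_of_gt hD
    refine Prod.ext ?_ ?_ <;> (simp only []; rw [div_mul_eq_mul_div, div_mul_eq_mul_div, ← add_div, div_eq_iff hD']; ring)
  have hker2 : Module.finrank ℝ (LinearMap.ker L) = 2 := by
    have hrange : LinearMap.range L = ⊤ := LinearMap.range_eq_top.mpr hsurj
    have h1 := LinearMap.finrank_range_add_finrank_ker L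
    rw [hrange] at h1
    have h2 : Module.finrank ℝ (⊤ : Submodule ℝ (ℝ × ℝ)) = 2 := by
      simp [finrank_top]
    have h3 : Module.finrank ℝ (Fin 4 → ℝ) = 4 := by simp
    omega
  -- β is contained in ker L, hence equals it
  have hβle : β ≤ LinearMap.ker L := by
    intro v hv
    rw [LinearMap.mem_ker, hLapply, mink_symm v a, mink_symm v c,
      horth a haα v hv, horth c hcα v hv]
    rfl
  have hβeq : β = LinearMap.ker L :=
    Submodule.eq_of_le_of_finrank_le hβle (by rw [hβ2, hker2])
  -- build a timelike vector in ker L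
  set e0 : Fin 4 → ℝ := ![1, 0, 0, 0] with he0
  set p : ℝ := minkowski e0 a with hp
  set q : ℝ := minkowski e0 c with hq
  set s : ℝ := (p * B - q * C) / (A * B - C * C) with hs
  set r : ℝ := (q * A - p * C) / (A * B - C * C) with hr
  have hD' : A * B - C * C ≠ 0 := ne_of_gt hD
  have hsA : s * A + r * C = p := by rw [hs, hr]; rw [div_mul_eq_mul_div, div_mul_eq_mul_div, ← add_div, div_eq_iff hD']; ring
  have hsC : s * C + r * B = q := by rw [hs, hr]; rw [div_mul_eq_mul_div, div_mul_eq_mul_div, ← add_div, div_eq_iff hD']; ring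
  set t : Fin 4 → ℝ := e0 - s • a - r • c with ht
  have hta : minkowski t a = 0 := by
    rw [ht, mink_sub_sub, ← hp, ← hA, mink_symm c a, ← hC]
    linarith [hsA]
  have htc : minkowski t c = 0 := by
    rw [ht, mink_sub_sub, ← hq, ← hC, ← hB]
    linarith [hsC]
  have htker : t ∈ LinearMap.ker L := by
    rw [LinearMap.mem_ker, hLapply, hta, htc]
    rfl
  -- t is timelike
  have hQnn : 0 ≤ s * s * A + 2 * (s * r) * C + r * r * B := by
    by_cases hw : s • a + r • c = 0
    · have h0 : minkowski (s • a + r • c) (s • a + r • c) = 0 := by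
        rw [hw]; simp [minkowski]
      rw [hQ] at h0; linarith
    · have := hpos _ (α.add_mem (α.smul_mem _ haα) (α.smul_mem _ hcα)) hw
      rw [hQ] at this; linarith
  have hte0 : minkowski t e0 = -1 - s * p - r * q := by
    rw [ht, mink_sub_sub, mink_symm a e0, ← hp, mink_symm c e0, ← hq]
    have : minkowski e0 e0 = -1 := by simp [he0, minkowski]
    rw [this]
  have htt : minkowski t t < 0 := by
    have hexp := mink_sub_sub_right e0 s r a c t
    rw [← ht] at hexp
    rw [hexp, hta, htc, hte0]
    have hpq : s * p + r * q = s * s * A + 2 * (s * r) * C + r * r * B := by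
      rw [← hsA, ← hsC]; ring
    nlinarith [hQnn, hpq]
  have htβ : t ∈ β := by rw [hβeq]; exact htker
  exact hβnt t htβ htt

end Stmt9Aux

theorem stmt_9 (α β : Submodule ℝ (Fin 4 → ℝ))
    (hα2 : Module.finrank ℝ α = 2)
    (hβ2 : Module.finrank ℝ β = 2)
    (horth : ∀ u ∈ α, ∀ v ∈ β, minkowski u v = 0)
    (hαnt : ∀ u ∈ α, ¬ minkowski u u < 0)
    (hβnt : ∀ v ∈ β, ¬ minkowski v v < 0) :
    ∃ u ∈ α, ∃ v ∈ β, u ≠ 0 ∧ v ≠ 0 ∧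
      minkowski u u = 0 ∧ minkowski v v = 0 ∧ ∃ l : ℝ, v = l • u := by
  have horth' : ∀ v ∈ β, ∀ u ∈ α, minkowski v u = 0 := by
    intro v hv u hu
    rw [Stmt9Aux.mink_symm]
    exact horth u hu v hv
  -- α contains a nonzero null vector
  have hαnull : ∃ u ∈ α, u ≠ 0 ∧ minkowski u u = 0 := by
    by_contra hcon
    push_neg at hcon
    refine Stmt9Aux.exists_null α β hα2 hβ2 horth hβnt ?_
    intro u hu hune
    rcases lt_or_eq_of_le (not_lt.mp (hαnt u hu)) with h | h
    · exact h
    · exact absurd h.symm (hcon u hu hune)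
  have hβnull : ∃ v ∈ β, v ≠ 0 ∧ minkowski v v = 0 := by
    by_contra hcon
    push_neg at hcon
    refine Stmt9Aux.exists_null β α hβ2 hα2 horth' hαnt ?_
    intro v hv hvne
    rcases lt_or_eq_of_le (not_lt.mp (hβnt v hv)) with h | h
    · exact h
    · exact absurd h.symm (hcon v hv hvne)
  obtain ⟨u, hu, hune, huu⟩ := hαnull
  obtain ⟨v, hv, hvne, hvv⟩ := hβnull
  exact ⟨u, hu, v, hv, hune, hvne, huu, hvv,
    Stmt9Aux.null_collinear u v hune hvne huu hvv (horth u hu v hv)⟩
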